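/- arXiv:0806.1779 — 2 statements merged into one kernel-verified Lean document; each statement's English description precedes it below -/
import Mathlib

section
/- Let t ≥ 0 and let φ : V → ℂ be a holomorphic injective contraction on an open neighborhood V of a compact set X ⊂ ℂ, and let π : I^∞ → X be a coding map satisfying |π(ω) - π(τ)| ≤ e^{-α|ω∧τ|} diam(X). Suppose there exist constants K ≥ 1 and L > 0 with ||φ'(y)| - |φ'(x)|| ≤ L‖(φ')^{-1}‖_V^{-1}|y - x| for x, y ∈ V and |φ'(y)| ≤ K|φ'(x)| for x, y ∈ V. Then the function ω ↦ |φ'(π(ω))|^t on I^∞ has α-Hölder seminorm v_α at most K·L·t·diam(X)·‖φ'‖^t, and its ‖·‖_α norm is at most (1 + K·L·t·diam(X))·‖φ'‖^t. -/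
open scoped ENNReal

/-- `ω` and `τ` agree on their first `n` letters, i.e. `|ω ∧ τ| ≥ n`. -/
def agreeWord {I : Type*} (ω τ : ℕ → I) (n : ℕ) : Prop := ∀ k < n, ω k = τ k

/-- The supremum norm `‖g‖_∞` of a real-valued `g : I^∞ → ℝ` (as an extended real). -/
noncomputable def supNormSeqR {I : Type*} (g : (ℕ → I) → ℝ) : ℝ≥0∞ :=
  ⨆ ω : ℕ → I, ENNReal.ofReal |g ω|

/-- The `α`-Hölder seminorm `v_α(g) = sup { |g ω - g τ| e^{αn} : |ω ∧ τ| ≥ n }`. -/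
noncomputable def vHolderR {I : Type*} (α : ℝ) (g : (ℕ → I) → ℝ) : ℝ≥0∞ :=
  ⨆ (n : ℕ) (ω : ℕ → I) (τ : ℕ → I) (_ : agreeWord ω τ n),
    ENNReal.ofReal (|g ω - g τ| * Real.exp (α * n))

/-- The Hölder norm `‖g‖_α = ‖g‖_∞ + v_α(g)`. -/
noncomputable def holderNormR {I : Type*} (α : ℝ) (g : (ℕ → I) → ℝ) : ℝ≥0∞ :=
  supNormSeqR g + vHolderR α g

/-- Mean-value-type bound: for `0 < b ≤ a` and `0 ≤ t`, there is `c ∈ [b, a]` with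
`a^t - b^t ≤ t * c^(t-1) * (a - b)`. -/
lemma rpow_sub_rpow_le_aux {t a b : ℝ} (ht : 0 ≤ t) (hb : 0 < b) (hba : b ≤ a) :
    ∃ c, b ≤ c ∧ c ≤ a ∧ a ^ t - b ^ t ≤ t * c ^ (t - 1) * (a - b) := by
  have ha : 0 < a := hb.trans_le hba
  rcases le_total t 1 with h1 | h1
  · refine ⟨b, le_refl b, hba, ?_⟩
    have hs : (-1 : ℝ) ≤ a / b - 1 := by
      have : 0 ≤ a / b := by positivity
      linarith
    have hB := rpow_one_add_le_one_add_mul_self hs ht h1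
    rw [show (1 + (a / b - 1)) = a / b by ring, Real.div_rpow ha.le hb.le] at hB
    have hbt : 0 < b ^ t := Real.rpow_pos_of_pos hb t
    have h2 : a ^ t ≤ (1 + t * (a / b - 1)) * b ^ t := (div_le_iff₀ hbt).mp hB
    have h3 : b ^ (t - 1) = b ^ t / b := Real.rpow_sub_one hb.ne' t
    rw [h3]
    have h4 : (1 + t * (a / b - 1)) * b ^ t = b ^ t + t * (b ^ t / b) * (a - b) := by
      field_simp
    linarith [h4 ▸ h2]
  · refine ⟨a, hba, le_refl a, ?_⟩
    have hs : (-1 : ℝ) ≤ b / a - 1 := by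
      have : 0 ≤ b / a := by positivity
      linarith
    have hB := one_add_mul_self_le_rpow_one_add hs h1
    rw [show (1 + (b / a - 1)) = b / a by ring, Real.div_rpow hb.le ha.le] at hB
    have hat : 0 < a ^ t := Real.rpow_pos_of_pos ha t
    have h2 : (1 + t * (b / a - 1)) * a ^ t ≤ b ^ t := by
      rw [div_eq_mul_inv] at hB
      calc (1 + t * (b / a - 1)) * a ^ t ≤ b ^ t * (a ^ t)⁻¹ * a ^ t := by
            exact mul_le_mul_of_nonneg_right hB hat.le
        _ = b ^ t := by field_simp
    have h3 : a ^ (t - 1) = a ^ t / a := Real.rpow_sub_one ha.ne' t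
    rw [h3]
    have h4 : (1 + t * (b / a - 1)) * a ^ t = a ^ t - t * (a ^ t / a) * (a - b) := by
      field_simp
      ring
    linarith [h4 ▸ h2]

/-- Key inequality: `|a^t - b^t| ≤ t M^t C` when `m ≤ a, b ≤ M` and `|a - b| ≤ m C`. -/
lemma abs_rpow_sub_rpow_le {t a b m M C : ℝ} (ht : 0 ≤ t) (ha : 0 ≤ a) (hb : 0 ≤ b)
    (hm : 0 ≤ m) (hma : m ≤ a) (hmb : m ≤ b) (haM : a ≤ M) (hbM : b ≤ M) (hC : 0 ≤ C)
    (hab : |a - b| ≤ m * C) : |a ^ t - b ^ t| ≤ t * M ^ t * C := by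
  have hM : 0 ≤ M := ha.trans haM
  have hMt : 0 ≤ M ^ t := Real.rpow_nonneg hM t
  -- reduce to the case b ≤ a by symmetry
  wlog hba : b ≤ a generalizing a b
  · rw [abs_sub_comm] at hab ⊢
    exact this hb ha hmb hma hbM haM hab (le_of_not_ge hba)
  rcases eq_or_lt_of_le hb with hb0 | hb0
  · -- b = 0, hence m = 0, hence a = 0
    have hm0 : m = 0 := le_antisymm (hmb.trans hb0.symm.le) hm
    have ha0 : a = 0 := by
      rw [hm0, zero_mul] at hab
      have h0 : |a - b| = 0 := le_antisymm hab (abs_nonneg _)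
      have h1 : a - b = 0 := abs_eq_zero.mp h0
      linarith
    rw [ha0, ← hb0, sub_self, abs_zero]
    positivity
  · obtain ⟨c, hbc, hca, hkey⟩ := rpow_sub_rpow_le_aux ht hb0 hba
    have hc : 0 < c := hb0.trans_le hbc
    have habs : |a ^ t - b ^ t| = a ^ t - b ^ t :=
      abs_of_nonneg (sub_nonneg.2 (Real.rpow_le_rpow hb hba ht))
    rw [habs]
    have hct1 : 0 ≤ c ^ (t - 1) := (Real.rpow_pos_of_pos hc _).le
    have hab' : a - b ≤ m * C := (le_abs_self _).trans hab
    have hmc : m ≤ c := hmb.trans hbc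
    have hcM : c ≤ M := hca.trans haM
    calc a ^ t - b ^ t ≤ t * c ^ (t - 1) * (a - b) := hkey
      _ ≤ t * c ^ (t - 1) * (m * C) := by
          apply mul_le_mul_of_nonneg_left hab' (by positivity)
      _ = t * (c ^ (t - 1) * m) * C := by ring
      _ ≤ t * (c ^ (t - 1) * c) * C := by
          apply mul_le_mul_of_nonneg_right _ hC
          exact mul_le_mul_of_nonneg_left (mul_le_mul_of_nonneg_left hmc hct1) ht
      _ = t * c ^ t * C := by
          rw [Real.rpow_sub_one hc.ne' t, div_mul_cancel₀ _ hc.ne']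
      _ ≤ t * M ^ t * C := by
          apply mul_le_mul_of_nonneg_right _ hC
          exact mul_le_mul_of_nonneg_left (Real.rpow_le_rpow hc.le hcM ht) ht

/-- Hölder estimate for `ω ↦ |φ'(π ω)|^t`: if `φ` is a holomorphic injective contraction on
a neighborhood `V` of the compact set `X`, the coding map `π` satisfies
`|π ω − π τ| ≤ e^{−α|ω∧τ|} diam X`, and `φ` satisfies the distortion properties
`||φ'(y)| − |φ'(x)|| ≤ L ‖(φ')⁻¹‖_V⁻¹ |y − x|` and `|φ'(y)| ≤ K |φ'(x)|` on `V`, then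
`v_α(|φ' ∘ π|^t) ≤ K L t diam(X) ‖φ'‖^t` and
`‖ |φ' ∘ π|^t ‖_α ≤ (1 + K L t diam(X)) ‖φ'‖^t`, where `‖φ'‖ = sup_X |φ'|`. -/
theorem holder_norm_deriv_pow
    {I : Type*} [Countable I]
    (α t : ℝ) (hα : 0 < α) (ht : 0 ≤ t)
    (X V : Set ℂ) (hXc : IsCompact X) (hXne : X.Nonempty) (hV : IsOpen V) (hXV : X ⊆ V)
    (φ : ℂ → ℂ) (hφ : DifferentiableOn ℂ φ V) (hinj : Set.InjOn φ V)
    (s : ℝ) (hs0 : 0 < s) (hs1 : s < 1)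
    (hcontr : ∀ x ∈ V, ∀ y ∈ V, dist (φ x) (φ y) ≤ s * dist x y)
    (π : (ℕ → I) → ℂ) (hπX : ∀ ω, π ω ∈ X)
    (hπ : ∀ (n : ℕ) (ω τ : ℕ → I), agreeWord ω τ n →
      dist (π ω) (π τ) ≤ Real.exp (-(α * n)) * Metric.diam X)
    (K L : ℝ) (hK : 1 ≤ K) (hL : 0 < L)
    (hdist : ∀ x ∈ V, ∀ y ∈ V,
      |‖deriv φ y‖ - ‖deriv φ x‖| ≤
        L * sInf ((fun z => ‖deriv φ z‖) '' V) * dist y x)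
    (hKdist : ∀ x ∈ V, ∀ y ∈ V, ‖deriv φ y‖ ≤ K * ‖deriv φ x‖) :
    vHolderR α (fun ω => ‖deriv φ (π ω)‖ ^ t) ≤
        ENNReal.ofReal (K * L * t * Metric.diam X *
          sSup ((fun z => ‖deriv φ z‖) '' X) ^ t) ∧
      holderNormR α (fun ω => ‖deriv φ (π ω)‖ ^ t) ≤
        ENNReal.ofReal ((1 + K * L * t * Metric.diam X) *
          sSup ((fun z => ‖deriv φ z‖) '' X) ^ t) := by
  set f : ℂ → ℝ := fun z => ‖deriv φ z‖ with hf
  set M : ℝ := sSup (f '' X) with hM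
  set m : ℝ := sInf (f '' V) with hm
  -- continuity of f on V
  have hderiv_cont : ContinuousOn (deriv φ) V := ((hφ.analyticOnNhd hV).deriv).continuousOn
  have hf_cont : ContinuousOn f X := (continuous_norm.comp_continuousOn hderiv_cont).mono hXV
  -- M is an upper bound on X
  have hbddM : BddAbove (f '' X) := (hXc.image_of_continuousOn hf_cont).bddAbove
  have hleM : ∀ z ∈ X, f z ≤ M := fun z hz => le_csSup hbddM ⟨z, hz, rfl⟩
  have hM0 : 0 ≤ M := by
    obtain ⟨x, hx⟩ := hXne
    exact le_trans (norm_nonneg _) (hleM x hx)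
  have hMt : 0 ≤ M ^ t := Real.rpow_nonneg hM0 t
  -- m is a nonneg lower bound on V
  have hbddm : BddBelow (f '' V) := ⟨0, by rintro _ ⟨z, _, rfl⟩; exact norm_nonneg _⟩
  have hm_le : ∀ z ∈ V, m ≤ f z := fun z hz => csInf_le hbddm ⟨z, hz, rfl⟩
  have hVne : V.Nonempty := ⟨hXne.choose, hXV hXne.choose_spec⟩
  have hm0 : 0 ≤ m := le_csInf (hVne.image f) (by rintro _ ⟨z, _, rfl⟩; exact norm_nonneg _)
  have hd0 : 0 ≤ Metric.diam X := Metric.diam_nonneg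
  have hC1 : 0 ≤ K * L * t * Metric.diam X * M ^ t := by
    have hK0 : (0:ℝ) ≤ K := le_trans zero_le_one hK
    positivity
  -- seminorm bound
  have hv : vHolderR α (fun ω => ‖deriv φ (π ω)‖ ^ t) ≤
      ENNReal.ofReal (K * L * t * Metric.diam X * M ^ t) := by
    rw [vHolderR]
    refine iSup_le fun n => iSup_le fun ω => iSup_le fun τ => iSup_le fun hagree => ?_
    apply ENNReal.ofReal_le_ofReal
    set a : ℝ := f (π ω)
    set b : ℝ := f (π τ)
    have haV : π ω ∈ V := hXV (hπX ω)
    have hbV : π τ ∈ V := hXV (hπX τ)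
    have hab : |a - b| ≤ m * (L * (Real.exp (-(α * n)) * Metric.diam X)) := by
      have h1 := hdist (π τ) hbV (π ω) haV
      have h2 := hπ n ω τ hagree
      have hLm : 0 ≤ L * m := mul_nonneg hL.le hm0
      calc |a - b| ≤ L * m * dist (π ω) (π τ) := h1
        _ ≤ L * m * (Real.exp (-(α * n)) * Metric.diam X) :=
            mul_le_mul_of_nonneg_left h2 hLm
        _ = m * (L * (Real.exp (-(α * n)) * Metric.diam X)) := by ring
    have hkey := abs_rpow_sub_rpow_le (t := t) (a := a) (b := b) (m := m) (M := M)
      (C := L * (Real.exp (-(α * n)) * Metric.diam X)) ht (norm_nonneg _) (norm_nonneg _)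
      hm0 (hm_le _ haV) (hm_le _ hbV) (hleM _ (hπX ω)) (hleM _ (hπX τ))
      (by positivity) hab
    have hexp : Real.exp (-(α * n)) * Real.exp (α * n) = 1 := by
      rw [← Real.exp_add]; simp
    calc |a ^ t - b ^ t| * Real.exp (α * n)
        ≤ t * M ^ t * (L * (Real.exp (-(α * n)) * Metric.diam X)) * Real.exp (α * n) :=
          mul_le_mul_of_nonneg_right hkey (Real.exp_nonneg _)
      _ = t * M ^ t * L * Metric.diam X * (Real.exp (-(α * n)) * Real.exp (α * n)) := by ring
      _ = L * t * Metric.diam X * M ^ t := by rw [hexp]; ring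
      _ ≤ K * L * t * Metric.diam X * M ^ t := by
          nlinarith [mul_nonneg (mul_nonneg (mul_nonneg hL.le ht) hd0) hMt]
  refine ⟨hv, ?_⟩
  -- sup norm bound
  have hsup : supNormSeqR (fun ω => ‖deriv φ (π ω)‖ ^ t) ≤ ENNReal.ofReal (M ^ t) := by
    rw [supNormSeqR]
    refine iSup_le fun ω => ?_
    apply ENNReal.ofReal_le_ofReal
    rw [abs_of_nonneg (Real.rpow_nonneg (norm_nonneg _) t)]
    exact Real.rpow_le_rpow (norm_nonneg _) (hleM _ (hπX ω)) ht
  calc holderNormR α (fun ω => ‖deriv φ (π ω)‖ ^ t)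
      ≤ ENNReal.ofReal (M ^ t) + ENNReal.ofReal (K * L * t * Metric.diam X * M ^ t) :=
        add_le_add hsup hv
    _ = ENNReal.ofReal (M ^ t + K * L * t * Metric.diam X * M ^ t) :=
        (ENNReal.ofReal_add hMt hC1).symm
    _ = ENNReal.ofReal ((1 + K * L * t * Metric.diam X) * M ^ t) := by ring_nf
end

section
/- Let Γ ⊂ ℂ be open and connected, V₀ ⊂ ℂ a bounded open set, and {f_γ : V₀ → V₀}_{γ∈Γ} a family of holomorphic maps such that for each fixed x ∈ V₀ the map γ ↦ f_γ(x) is holomorphic. If each f_γ restricted to a compact set X ⊂ V₀ is an s-contraction (s < 1 uniform in γ), then for each infinite word ω ∈ I^∞ of indexed maps from an analytic family {φ_i^γ}, the function γ ↦ π_γ(ω) := lim_{n→∞} φ_{ω_1}^γ∘⋯∘φ_{ω_n}^γ(x) is holomorphic on Γ, and the family {γ ↦ π_γ(ω)}_{ω∈I^∞} is equicontinuous on Γ. -/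
open Filter

/-- `iterComp f ω n = f_{ω_1} ∘ ⋯ ∘ f_{ω_n}`. -/
def iterComp {I : Type*} (f : I → ℂ → ℂ) (ω : ℕ → I) : ℕ → ℂ → ℂ
  | 0 => id
  | n + 1 => iterComp f ω n ∘ f (ω n)

open Metric Set Filter MeasureTheory intervalIntegral

lemma normDerivBound {U : Set ℂ} {f : ℂ → ℂ} {M : ℝ}
    (hf : DifferentiableOn ℂ f U) (hM : ∀ z ∈ U, ‖f z‖ ≤ M) {γ : ℂ} {ρ : ℝ} (hρ : 0 < ρ)
    (hb : ball γ ρ ⊆ U) : ‖deriv f γ‖ ≤ (2 * M + 1) / ρ := by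
  refine Complex.norm_deriv_le_div_of_mapsTo_ball (hf.mono hb) ?_ hρ
  intro z hz
  rw [mem_closedBall, dist_eq_norm]
  calc ‖f z - f γ‖ ≤ ‖f z‖ + ‖f γ‖ := norm_sub_le _ _
    _ ≤ M + M := add_le_add (hM z (hb hz)) (hM γ (hb (mem_ball_self hρ)))
    _ ≤ 2 * M + 1 := by linarith


/-- Schwarz-type Lipschitz estimate for a bounded holomorphic function. -/
lemma distLip {U : Set ℂ} {f : ℂ → ℂ} {M : ℝ}
    (hf : DifferentiableOn ℂ f U) (hM : ∀ z ∈ U, ‖f z‖ ≤ M) {γ γ' : ℂ} {ρ : ℝ} (hρ : 0 < ρ)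
    (hb : Metric.ball γ ρ ⊆ U) (hγ' : γ' ∈ Metric.ball γ ρ) :
    dist (f γ') (f γ) ≤ (2 * M + 1) / ρ * dist γ' γ := by
  refine Complex.dist_le_div_mul_dist_of_mapsTo_ball (hf.mono hb) ?_ hγ'
  intro z hz
  rw [Metric.mem_closedBall, dist_eq_norm]
  calc ‖f z - f γ‖ ≤ ‖f z‖ + ‖f γ‖ := norm_sub_le _ _
    _ ≤ M + M := add_le_add (hM z (hb hz)) (hM γ (hb (Metric.mem_ball_self hρ)))
    _ ≤ 2 * M + 1 := by linarith

/-- Osgood-type lemma: a separately holomorphic bounded function composed with a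
holomorphic map in the second variable is holomorphic. -/
lemma osgood_comp {U W : Set ℂ} (hUo : IsOpen U) (hWo : IsOpen W) (F : ℂ → ℂ → ℂ) (M : ℝ)
    (hFx : ∀ γ ∈ U, DifferentiableOn ℂ (F γ) W)
    (hFγ : ∀ x ∈ W, DifferentiableOn ℂ (fun γ => F γ x) U)
    (hM : ∀ γ ∈ U, ∀ x ∈ W, ‖F γ x‖ ≤ M)
    (c : ℂ → ℂ) (hc : DifferentiableOn ℂ c U) (hcW : Set.MapsTo c U W) :
    DifferentiableOn ℂ (fun γ => F γ (c γ)) U := by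
  intro γ₀ hγ₀
  apply DifferentiableAt.differentiableWithinAt
  set x₀ := c γ₀ with hx₀def
  have hx₀W : x₀ ∈ W := hcW hγ₀
  obtain ⟨r2, hr2, hr2W⟩ := Metric.isOpen_iff.1 hWo x₀ hx₀W
  set r : ℝ := r2 / 2 with hrdef
  have hr : 0 < r := by positivity
  have hrW : closedBall x₀ r ⊆ W :=
    (closedBall_subset_ball (by rw [hrdef]; linarith)).trans hr2W
  have hcat : ContinuousAt c γ₀ := (hc.differentiableAt (hUo.mem_nhds hγ₀)).continuousAt
  have hev : ∀ᶠ γ in nhds γ₀, γ ∈ U ∧ c γ ∈ ball x₀ (r / 2) :=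
    Filter.Eventually.and (hUo.mem_nhds hγ₀ : ∀ᶠ γ in nhds γ₀, γ ∈ U)
      (hcat (ball_mem_nhds _ (by positivity)))
  obtain ⟨δ, hδ0, hδ⟩ := Metric.eventually_nhds_iff_ball.mp hev
  have hδU : ball γ₀ δ ⊆ U := fun γ hγ => (hδ γ hγ).1
  -- notation
  set w : ℝ → ℂ := fun θ => circleMap x₀ r θ with hwdef
  have hwW : ∀ θ, w θ ∈ W := by
    intro θ
    exact hrW (sphere_subset_closedBall (circleMap_mem_sphere _ hr.le _))
  have hwc : ∀ γ ∈ ball γ₀ δ, ∀ θ, r / 2 ≤ ‖w θ - c γ‖ := by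
    intro γ hγ θ
    have h1 : dist (w θ) x₀ = r := mem_sphere.mp (circleMap_mem_sphere x₀ hr.le θ)
    have h2 : dist (c γ) x₀ < r / 2 := (hδ γ hγ).2
    have := dist_triangle (w θ) (c γ) x₀
    rw [← dist_eq_norm, dist_comm] at *
    linarith [dist_triangle x₀ (c γ) (w θ), dist_comm (c γ) (w θ)]
  have hwc0 : ∀ γ ∈ ball γ₀ δ, ∀ θ, w θ - c γ ≠ 0 := by
    intro γ hγ θ
    have := hwc γ hγ θ
    intro h
    rw [h, norm_zero] at this
    linarith
  -- the kernels
  set K : ℂ → ℝ → ℂ := fun γ θ =>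
    (circleMap 0 r θ * Complex.I) * ((w θ - c γ)⁻¹ * F γ (w θ)) with hKdef
  set K' : ℂ → ℝ → ℂ := fun γ θ =>
    (circleMap 0 r θ * Complex.I) *
      ((deriv c γ / (w θ - c γ) ^ 2) * F γ (w θ)
        + (w θ - c γ)⁻¹ * deriv (fun γ' => F γ' (w θ)) γ) with hK'def
  -- continuity in θ of basic blocks
  have hFcont : ∀ γ ∈ U, Continuous (fun θ => F γ (w θ)) := by
    intro γ hγ
    exact (hFx γ hγ).continuousOn.comp_continuous (continuous_circleMap _ _) hwW
  have hKcont : ∀ γ ∈ ball γ₀ δ, Continuous (K γ) := by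
    intro γ hγ
    refine ((continuous_circleMap 0 r).mul continuous_const).mul
      ((Continuous.inv₀ ((continuous_circleMap _ _).sub continuous_const)
        (hwc0 γ hγ)).mul (hFcont γ (hδU hγ)))
  -- constants and bounds
  have hM0 : 0 ≤ M := le_trans (norm_nonneg _) (hM γ₀ hγ₀ x₀ hx₀W)
  set Mc : ℝ := ‖x₀‖ + r with hMcdef
  have hMc0 : 0 < Mc := add_pos_of_nonneg_of_pos (norm_nonneg _) hr
  have hcb : ∀ γ ∈ ball γ₀ δ, ‖c γ‖ ≤ Mc := by
    intro γ hγ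
    have h2 : dist (c γ) x₀ < r / 2 := (hδ γ hγ).2
    rw [dist_eq_norm] at h2
    have h3 := norm_sub_norm_le (c γ) x₀
    rw [hMcdef]; linarith
  set Lc : ℝ := (2 * Mc + 1) / (δ / 2) with hLcdef
  have hLc0 : 0 ≤ Lc := by positivity
  have hLc : ∀ γ ∈ ball γ₀ (δ / 2), ‖deriv c γ‖ ≤ Lc := by
    intro γ hγ
    refine normDerivBound (hc.mono hδU) hcb (by positivity) ?_
    refine ball_subset_ball' ?_
    rw [mem_ball] at hγ; linarith
  set LF : ℝ := (2 * M + 1) / (δ / 2) with hLFdef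
  have hLF0 : 0 ≤ LF := by positivity
  have hLF : ∀ γ ∈ ball γ₀ (δ / 2), ∀ θ,
      ‖deriv (fun γ' => F γ' (w θ)) γ‖ ≤ LF := by
    intro γ hγ θ
    refine normDerivBound (hFγ _ (hwW θ)) (fun z hz => hM z hz _ (hwW θ)) (by positivity) ?_
    refine subset_trans (ball_subset_ball' ?_) hδU
    rw [mem_ball] at hγ; linarith
  have hballsub : ball γ₀ (δ / 2) ⊆ ball γ₀ δ := ball_subset_ball (by linarith)
  set B : ℝ := r * (Lc / (r / 2) ^ 2 * M + 2 / r * LF) with hBdef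
  -- derivative of K in γ
  have h_diff : ∀ θ, ∀ γ ∈ ball γ₀ (δ / 2), HasDerivAt (fun γ' => K γ' θ) (K' γ θ) γ := by
    intro θ γ hγ
    have hγδ : γ ∈ ball γ₀ δ := hballsub hγ
    have hγU : γ ∈ U := hδU hγδ
    have hcd : HasDerivAt c (deriv c γ) γ := (hc.differentiableAt (hUo.mem_nhds hγU)).hasDerivAt
    have h1 : HasDerivAt (fun γ' => w θ - c γ') (-deriv c γ) γ := hcd.const_sub _
    have h2 := h1.inv (hwc0 γ hγδ θ)
    rw [neg_neg] at h2
    have h3 : HasDerivAt (fun γ' => F γ' (w θ)) (deriv (fun γ' => F γ' (w θ)) γ) γ :=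
      ((hFγ _ (hwW θ)).differentiableAt (hUo.mem_nhds hγU)).hasDerivAt
    exact (h2.mul h3).const_mul _
  -- bound on K'
  have h_bound : ∀ θ, ∀ γ ∈ ball γ₀ (δ / 2), ‖K' γ θ‖ ≤ B := by
    intro θ γ hγ
    have hγδ : γ ∈ ball γ₀ δ := hballsub hγ
    have hγU : γ ∈ U := hδU hγδ
    have hw2 : r / 2 ≤ ‖w θ - c γ‖ := hwc γ hγδ θ
    have hFb : ‖F γ (w θ)‖ ≤ M := hM γ hγU _ (hwW θ)
    have hC : ‖circleMap 0 r θ * Complex.I‖ = r := by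
      rw [norm_mul, Complex.norm_I, mul_one, norm_circleMap_zero,
        abs_of_pos hr]
    rw [hK'def]
    simp only []
    rw [norm_mul, hC, hBdef]
    have ht1 : ‖deriv c γ / (w θ - c γ) ^ 2 * F γ (w θ)‖ ≤ Lc / (r / 2) ^ 2 * M := by
      rw [norm_mul, norm_div, norm_pow]
      gcongr
      exact hLc γ hγ
    have ht2 : ‖(w θ - c γ)⁻¹ * deriv (fun γ' => F γ' (w θ)) γ‖ ≤ 2 / r * LF := by
      rw [norm_mul, norm_inv]
      have h2r : ‖w θ - c γ‖⁻¹ ≤ 2 / r := by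
        rw [← inv_div]
        exact inv_anti₀ (by positivity) hw2
      exact mul_le_mul h2r (hLF γ hγ θ) (norm_nonneg _) (by positivity)
    have hinner := (norm_add_le _ _).trans (add_le_add ht1 ht2)
    exact mul_le_mul_of_nonneg_left hinner hr.le
  -- measurability of K' γ₀
  have hGm : StronglyMeasurable (fun θ => deriv (fun γ' => F γ' (w θ)) γ₀) := by
    set hseq : ℕ → ℝ := fun n => δ / (n + 2) with hhdef
    have hh0 : ∀ n, 0 < hseq n := fun n => by positivity
    have hhδ : ∀ n, hseq n < δ := by
      intro n
      rw [hhdef]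
      rw [div_lt_iff₀ (by positivity)]
      nlinarith [hδ0]
    have hhU : ∀ n : ℕ, γ₀ + (hseq n : ℂ) ∈ U := by
      intro n
      refine hδU ?_
      rw [mem_ball, dist_eq_norm, add_sub_cancel_left, Complex.norm_real,
        Real.norm_eq_abs, abs_of_pos (hh0 n)]
      exact hhδ n
    refine stronglyMeasurable_of_tendsto atTop
      (f := fun n θ => (F (γ₀ + (hseq n : ℂ)) (w θ) - F γ₀ (w θ)) / (γ₀ + (hseq n : ℂ) - γ₀))
      (fun n => (((hFcont _ (hhU n)).sub (hFcont γ₀ hγ₀)).div_const _).stronglyMeasurable) ?_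
    rw [tendsto_pi_nhds]
    intro θ
    have hd : HasDerivAt (fun γ' => F γ' (w θ)) (deriv (fun γ' => F γ' (w θ)) γ₀) γ₀ :=
      ((hFγ _ (hwW θ)).differentiableAt (hUo.mem_nhds hγ₀)).hasDerivAt
    have hslope := hasDerivAt_iff_tendsto_slope.mp hd
    have hl1 : Tendsto hseq atTop (nhds 0) := by
      have h := (tendsto_const_div_atTop_nhds_zero_nat δ).comp (tendsto_add_atTop_nat 2)
      simp only [Function.comp_def] at h
      have heq : (fun n : ℕ => δ / (↑(n + 2) : ℝ)) = hseq := by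
        funext n; rw [hhdef]; push_cast; ring
      rwa [heq] at h
    have hl2 : Tendsto (fun n => γ₀ + (hseq n : ℂ)) atTop (nhds γ₀) := by
      have := ((Complex.continuous_ofReal.tendsto 0).comp hl1)
      have h3 := tendsto_const_nhds (x := γ₀) (f := atTop (α := ℕ)) |>.add this
      simpa using h3
    have hl3 : Tendsto (fun n => γ₀ + (hseq n : ℂ)) atTop (nhdsWithin γ₀ {γ₀}ᶜ) := by
      refine tendsto_nhdsWithin_of_tendsto_nhds_of_eventually_within _ hl2 ?_
      filter_upwards with n
      simp only [Set.mem_compl_iff, Set.mem_singleton_iff]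
      intro h
      have := add_left_cancel (a := γ₀) (b := (hseq n : ℂ)) (c := 0) (by simpa using h)
      exact (Complex.ofReal_ne_zero.2 (hh0 n).ne') this
    have := hslope.comp hl3
    simpa only [Function.comp_def, slope_def_field] using this
  have hF'meas : AEStronglyMeasurable (K' γ₀)
      (MeasureTheory.volume.restrict (Set.uIoc (0:ℝ) (2 * Real.pi))) := by
    have hcC : Continuous fun θ : ℝ => circleMap 0 r θ * Complex.I :=
      (continuous_circleMap 0 r).mul continuous_const
    have hcA : Continuous fun θ => deriv c γ₀ / (w θ - c γ₀) ^ 2 * F γ₀ (w θ) := by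
      refine Continuous.mul ?_ (hFcont γ₀ hγ₀)
      refine continuous_const.div (((continuous_circleMap _ _).sub continuous_const).pow 2)
        (fun θ => pow_ne_zero 2 (hwc0 γ₀ (mem_ball_self hδ0) θ))
    have hcB : Continuous fun θ => (w θ - c γ₀)⁻¹ :=
      Continuous.inv₀ ((continuous_circleMap _ _).sub continuous_const)
        (hwc0 γ₀ (mem_ball_self hδ0))
    exact (hcC.stronglyMeasurable.mul
      (hcA.stronglyMeasurable.add (hcB.stronglyMeasurable.mul hGm))).aestronglyMeasurable
  -- differentiability of the parametrized integral
  have hg := (intervalIntegral.hasDerivAt_integral_of_dominated_loc_of_deriv_le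
      (F := K) (F' := K') (bound := fun _ => B) (a := (0:ℝ)) (b := 2 * Real.pi)
      (μ := MeasureTheory.volume) (x₀ := γ₀) (ball_mem_nhds γ₀ (half_pos hδ0))
      (Filter.eventually_of_mem (ball_mem_nhds γ₀ hδ0)
        (fun γ hγ => (hKcont γ hγ).aestronglyMeasurable))
      ((hKcont γ₀ (mem_ball_self hδ0)).intervalIntegrable _ _)
      hF'meas
      (Filter.Eventually.of_forall (fun θ _ γ hγ => h_bound θ γ hγ))
      intervalIntegrable_const
      (Filter.Eventually.of_forall (fun θ _ γ hγ => h_diff θ γ hγ))).2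
  -- the Cauchy integral representation
  have h2πI : (2 * (Real.pi : ℂ) * Complex.I) ≠ 0 :=
    mul_ne_zero (mul_ne_zero two_ne_zero (Complex.ofReal_ne_zero.2 Real.pi_ne_zero))
      Complex.I_ne_zero
  have hrep : ∀ γ ∈ ball γ₀ δ,
      F γ (c γ) = (2 * (Real.pi : ℂ) * Complex.I)⁻¹ *
        ∫ θ in (0:ℝ)..(2 * Real.pi), K γ θ := by
    intro γ hγ
    have hd : DifferentiableOn ℂ (F γ) (closedBall x₀ r) := (hFx γ (hδU hγ)).mono hrW
    have hcγ : c γ ∈ ball x₀ r := by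
      have := (hδ γ hγ).2
      rw [mem_ball] at this ⊢
      linarith
    have h1 := hd.circleIntegral_sub_inv_smul hcγ
    have h2 : (∮ z in C(x₀, r), (z - c γ)⁻¹ • F γ z) =
        ∫ θ in (0:ℝ)..(2 * Real.pi), K γ θ := by
      simp only [circleIntegral, deriv_circleMap, smul_eq_mul, hKdef, hwdef]
    rw [h2] at h1
    rw [h1, smul_eq_mul, ← mul_assoc, inv_mul_cancel₀ h2πI, one_mul]
  have hgd : DifferentiableAt ℂ
      (fun γ => (2 * (Real.pi : ℂ) * Complex.I)⁻¹ *
        ∫ θ in (0:ℝ)..(2 * Real.pi), K γ θ) γ₀ :=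
    hg.differentiableAt.const_mul _
  refine hgd.congr_of_eventuallyEq ?_
  exact Filter.eventually_of_mem (ball_mem_nhds γ₀ hδ0) (fun γ hγ => hrep γ hγ)


/-- For an analytic family of holomorphic IFSs (all generators extend to holomorphic
self-maps of a bounded open `V₀ ⊇ X`, `γ ↦ φ_i^γ(x)` holomorphic, uniform contraction
ratio `s < 1` on the compact set `X`), each map `γ ↦ π_γ(ω)` (with
`π_γ(ω) = lim_n φ_{ω_1}^γ ∘ ⋯ ∘ φ_{ω_n}^γ(x₀)`) is holomorphic on `Γ`, and the family
`{γ ↦ π_γ(ω)}_{ω ∈ I^∞}` is equicontinuous on `Γ`. -/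
theorem codingMap_holomorphic_and_equicontinuous
    {I : Type*} [Countable I]
    (Γ V₀ : Set ℂ) (hΓ : IsOpen Γ) (hΓconn : IsConnected Γ)
    (hV₀ : IsOpen V₀) (hV₀b : Bornology.IsBounded V₀)
    (X : Set ℂ) (hXc : IsCompact X) (hXV : X ⊆ V₀)
    (x₀ : ℂ) (hx₀ : x₀ ∈ X)
    (φ : I → ℂ → ℂ → ℂ)
    (hmap : ∀ i, ∀ γ ∈ Γ, Set.MapsTo (φ i γ) V₀ V₀)
    (hholo : ∀ i, ∀ γ ∈ Γ, DifferentiableOn ℂ (φ i γ) V₀)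
    (hpar : ∀ i, ∀ x ∈ V₀, DifferentiableOn ℂ (fun γ => φ i γ x) Γ)
    (s : ℝ) (hs0 : 0 ≤ s) (hs1 : s < 1)
    (hcontr : ∀ i, ∀ γ ∈ Γ, ∀ x ∈ X, ∀ y ∈ X,
      dist (φ i γ x) (φ i γ y) ≤ s * dist x y)
    (π : ℂ → (ℕ → I) → ℂ)
    (hπ : ∀ γ ∈ Γ, ∀ ω : ℕ → I,
      Tendsto (fun n => iterComp (fun i => φ i γ) ω n x₀) atTop (nhds (π γ ω))) :
    (∀ ω : ℕ → I, DifferentiableOn ℂ (fun γ => π γ ω) Γ) ∧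
      EquicontinuousOn (fun (ω : ℕ → I) (γ : ℂ) => π γ ω) Γ := by
  -- A uniform bound on everything in `V₀`
  obtain ⟨M₀, hM₀⟩ := hV₀b.subset_closedBall 0
  have hVM : ∀ z ∈ V₀, ‖z‖ ≤ M₀ := fun z hz => mem_closedBall_zero_iff.1 (hM₀ hz)
  have hx₀V : x₀ ∈ V₀ := hXV hx₀
  have hM₀0 : 0 ≤ M₀ := le_trans (norm_nonneg x₀) (hVM x₀ hx₀V)
  -- Each finite composition (starting from a holomorphic `V₀`-valued function)
  -- is holomorphic in the parameter and `V₀`-valued.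
  have key : ∀ (ω : ℕ → I) (n : ℕ) (c : ℂ → ℂ), DifferentiableOn ℂ c Γ →
      Set.MapsTo c Γ V₀ →
      DifferentiableOn ℂ (fun γ => iterComp (fun i => φ i γ) ω n (c γ)) Γ ∧
        Set.MapsTo (fun γ => iterComp (fun i => φ i γ) ω n (c γ)) Γ V₀ := by
    intro ω n
    induction n with
    | zero => intro c hc hcm; simpa [iterComp] using ⟨hc, hcm⟩
    | succ n ih =>
      intro c hc hcm
      have hc' : DifferentiableOn ℂ (fun γ => φ (ω n) γ (c γ)) Γ :=
        osgood_comp hΓ hV₀ (φ (ω n)) M₀ (hholo (ω n)) (hpar (ω n))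
          (fun γ hγ x hx => hVM _ (hmap (ω n) γ hγ hx)) c hc hcm
      have hcm' : Set.MapsTo (fun γ => φ (ω n) γ (c γ)) Γ V₀ :=
        fun γ hγ => hmap (ω n) γ hγ (hcm hγ)
      have h := ih _ hc' hcm'
      simpa [iterComp, Function.comp] using h
  set y : (ℕ → I) → ℕ → ℂ → ℂ := fun ω n γ => iterComp (fun i => φ i γ) ω n x₀ with hydef
  have hconst : DifferentiableOn ℂ (fun _ : ℂ => x₀) Γ := differentiableOn_const _
  have hconstm : Set.MapsTo (fun _ : ℂ => x₀) Γ V₀ := fun γ _ => hx₀V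
  have hydiff : ∀ ω n, DifferentiableOn ℂ (y ω n) Γ := fun ω n => (key ω n _ hconst hconstm).1
  have hym : ∀ ω n, Set.MapsTo (y ω n) Γ V₀ := fun ω n => (key ω n _ hconst hconstm).2
  have hybdd : ∀ ω n, ∀ γ ∈ Γ, ‖y ω n γ‖ ≤ M₀ := fun ω n γ hγ => hVM _ (hym ω n hγ)
  -- local Lipschitz estimates and local uniform convergence
  have loc : ∀ γ₀ ∈ Γ, ∃ ρ > 0, ∃ L ≥ 0, ball γ₀ ρ ⊆ Γ ∧
      (∀ ω : ℕ → I, ∀ γ ∈ ball γ₀ (ρ/4), ∀ γ' ∈ ball γ₀ (ρ/4),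
        dist (π γ' ω) (π γ ω) ≤ L * dist γ' γ) ∧
      (∀ ω : ℕ → I, TendstoUniformlyOn (fun n γ => y ω n γ) (fun γ => π γ ω) atTop
        (closedBall γ₀ (ρ/8))) := by
    intro γ₀ hγ₀
    obtain ⟨ρ, hρ0, hρΓ⟩ := Metric.isOpen_iff.1 hΓ γ₀ hγ₀
    set L : ℝ := (2 * M₀ + 1) / (ρ / 2) with hLdef
    have hL0 : 0 ≤ L := by positivity
    have hb4 : ball γ₀ (ρ/4) ⊆ Γ := (ball_subset_ball (by linarith)).trans hρΓ
    have hLipY : ∀ (ω : ℕ → I) (n : ℕ), ∀ γ ∈ ball γ₀ (ρ/4), ∀ γ' ∈ ball γ₀ (ρ/4),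
        dist (y ω n γ') (y ω n γ) ≤ L * dist γ' γ := by
      intro ω n γ hγ γ' hγ'
      rw [mem_ball] at hγ hγ'
      refine distLip (hydiff ω n) (hybdd ω n) (by positivity) ?_ ?_
      · refine (ball_subset_ball' ?_).trans hρΓ
        linarith
      · rw [mem_ball]
        have := dist_triangle γ' γ₀ γ
        have h2 : dist γ₀ γ = dist γ γ₀ := dist_comm _ _
        linarith
    have hLipπ : ∀ (ω : ℕ → I), ∀ γ ∈ ball γ₀ (ρ/4), ∀ γ' ∈ ball γ₀ (ρ/4),
        dist (π γ' ω) (π γ ω) ≤ L * dist γ' γ := by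
      intro ω γ hγ γ' hγ'
      have ht : Tendsto (fun n => dist (y ω n γ') (y ω n γ)) atTop
          (nhds (dist (π γ' ω) (π γ ω))) :=
        (hπ γ' (hb4 hγ') ω).dist (hπ γ (hb4 hγ) ω)
      exact le_of_tendsto ht (Filter.Eventually.of_forall fun n => hLipY ω n γ hγ γ' hγ')
    refine ⟨ρ, hρ0, L, hL0, hρΓ, hLipπ, ?_⟩
    intro ω
    rw [Metric.tendstoUniformlyOn_iff]
    intro ε hε
    set η : ℝ := min (ρ/8) (ε/(4*(L+1))) with hηdef
    have hη0 : 0 < η := by positivity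
    obtain ⟨t, htK, htfin, htcov⟩ :=
      (isCompact_closedBall γ₀ (ρ/8)).finite_cover_balls hη0
    have hKb : closedBall γ₀ (ρ/8) ⊆ ball γ₀ (ρ/4) :=
      closedBall_subset_ball (by linarith)
    have hev : ∀ᶠ n in atTop, ∀ c ∈ t, dist (π c ω) (y ω n c) < ε/4 := by
      rw [eventually_all_finite htfin]
      intro c hc
      have hcΓ : c ∈ Γ := hb4 (hKb (htK hc))
      have := Metric.tendsto_nhds.mp (hπ c hcΓ ω) (ε/4) (by positivity)
      filter_upwards [this] with n hn
      rw [dist_comm]; exact hn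
    filter_upwards [hev] with n hn γ hγK
    obtain ⟨c, hct, hγc⟩ := Set.mem_iUnion₂.1 (htcov hγK)
    have hγ4 : γ ∈ ball γ₀ (ρ/4) := hKb hγK
    have hc4 : c ∈ ball γ₀ (ρ/4) := hKb (htK hct)
    have hd1 : dist (π γ ω) (π c ω) ≤ L * dist γ c := hLipπ ω c hc4 γ hγ4
    have hd3 : dist (y ω n c) (y ω n γ) ≤ L * dist c γ := hLipY ω n γ hγ4 c hc4
    have hdγc : dist γ c < η := mem_ball.1 hγc
    have hηε : η ≤ ε/(4*(L+1)) := min_le_right _ _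
    have hLη : L * η ≤ ε/4 := by
      have hle : L * (ε / (4 * (L + 1))) ≤ ε / 4 := by
        rw [← mul_div_assoc, div_le_div_iff₀ (by positivity) (by norm_num : (0:ℝ) < 4)]
        nlinarith
      exact (mul_le_mul_of_nonneg_left hηε hL0).trans hle
    calc dist (π γ ω) (y ω n γ)
        ≤ dist (π γ ω) (π c ω) + dist (π c ω) (y ω n c) + dist (y ω n c) (y ω n γ) :=
          dist_triangle4 _ _ _ _
      _ < L * dist γ c + ε/4 + L * dist c γ := by
          have := hn c hct
          exact add_lt_add_of_lt_of_le (add_lt_add_of_le_of_lt hd1 this) hd3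
      _ ≤ ε/4 + ε/4 + ε/4 := by
          rw [dist_comm c γ]
          have : L * dist γ c ≤ L * η := mul_le_mul_of_nonneg_left hdγc.le hL0
          have := this.trans hLη
          linarith
      _ < ε := by linarith
  constructor
  · -- holomorphy
    intro ω
    have hLU : TendstoLocallyUniformlyOn (fun n γ => y ω n γ) (fun γ => π γ ω) atTop Γ := by
      intro u hu γ₀ hγ₀
      obtain ⟨ρ, hρ0, L, hL0, hρΓ, _, hunif⟩ := loc γ₀ hγ₀
      exact ⟨closedBall γ₀ (ρ/8),
        mem_nhdsWithin_of_mem_nhds (closedBall_mem_nhds γ₀ (by positivity)),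
        hunif ω u hu⟩
    exact hLU.differentiableOn (Filter.Eventually.of_forall fun n => hydiff ω n) hΓ
  · -- equicontinuity
    intro γ₀ hγ₀
    intro u hu
    obtain ⟨ε, hε0, hε⟩ := Metric.mem_uniformity_dist.1 hu
    obtain ⟨ρ, hρ0, L, hL0, hρΓ, hLipπ, _⟩ := loc γ₀ hγ₀
    have hmem : ball γ₀ (min (ρ/4) (ε/(L+1))) ∈ nhdsWithin γ₀ Γ :=
      mem_nhdsWithin_of_mem_nhds (ball_mem_nhds γ₀ (by positivity))
    filter_upwards [hmem] with γ hγ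
    intro ω
    apply hε
    have hγ4 : γ ∈ ball γ₀ (ρ/4) := ball_subset_ball (min_le_left _ _) hγ
    have hγ04 : γ₀ ∈ ball γ₀ (ρ/4) := mem_ball_self (by positivity)
    have h1 : dist (π γ ω) (π γ₀ ω) ≤ L * dist γ γ₀ := hLipπ ω γ₀ hγ04 γ hγ4
    have h2 : dist γ γ₀ < ε/(L+1) := lt_of_lt_of_le (mem_ball.1 hγ) (min_le_right _ _)
    rw [dist_comm] at h1
    have h3 : L * dist γ γ₀ ≤ L * (ε/(L+1)) := mul_le_mul_of_nonneg_left h2.le hL0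
    have h4 : L * (ε/(L+1)) < ε := by
      rw [← mul_div_assoc, div_lt_iff₀ (by positivity)]
      nlinarith
    calc dist (π γ₀ ω) (π γ ω) ≤ L * dist γ γ₀ := h1
      _ ≤ L * (ε/(L+1)) := h3
      _ < ε := h4
end
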